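/- If C_1 = C_2 and ρ_{12} = 0, then for every Q ∈ [0,1), P_cor^opt(Q) = C_2(1−Q); equivalently, R_cor^opt(Q) = P_cor^opt(Q)/(1−Q) = C_2 for all Q ∈ [0,1). -/

import Mathlib

open Matrix ComplexOrder

noncomputable section

namespace FRIR

/-- A three-outcome POVM on a qubit: `M₀` is the inconclusive outcome. -/
def IsPOVM (M₀ M₁ M₂ : Matrix (Fin 2) (Fin 2) ℂ) : Prop :=
  M₀.PosSemidef ∧ M₁.PosSemidef ∧ M₂.PosSemidef ∧ M₀ + M₁ + M₂ = 1

/-- `ρ₀ = q₁ρ₁ + q₂ρ₂`. -/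
def rho0 (q₁ q₂ : ℝ) (ρ₁ ρ₂ : Matrix (Fin 2) (Fin 2) ℂ) : Matrix (Fin 2) (Fin 2) ℂ :=
  (q₁ : ℂ) • ρ₁ + (q₂ : ℂ) • ρ₂

/-- The probability of the inconclusive result, `P_I = tr(ρ₀M₀)`. -/
def PIof (q₁ q₂ : ℝ) (ρ₁ ρ₂ M₀ : Matrix (Fin 2) (Fin 2) ℂ) : ℝ :=
  (Matrix.trace (rho0 q₁ q₂ ρ₁ ρ₂ * M₀)).re

/-- `P_cor = q₁tr(ρ₁M₁) + q₂tr(ρ₂M₂)`. -/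
def Pcor (q₁ q₂ : ℝ) (ρ₁ ρ₂ M₁ M₂ : Matrix (Fin 2) (Fin 2) ℂ) : ℝ :=
  q₁ * (Matrix.trace (ρ₁ * M₁)).re + q₂ * (Matrix.trace (ρ₂ * M₂)).re

/-- `P̄_cor = q·tr(ρ₀M₀) + q₁tr(ρ₁M₁) + q₂tr(ρ₂M₂)`. -/
def PbarCor (q q₁ q₂ : ℝ) (ρ₁ ρ₂ M₀ M₁ M₂ : Matrix (Fin 2) (Fin 2) ℂ) : ℝ :=
  q * PIof q₁ q₂ ρ₁ ρ₂ M₀ + Pcor q₁ q₂ ρ₁ ρ₂ M₁ M₂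

/-- `P̄_cor^opt(q)`: the maximal value of `P̄_cor` over all POVMs. -/
def PbarOpt (q q₁ q₂ : ℝ) (ρ₁ ρ₂ : Matrix (Fin 2) (Fin 2) ℂ) : ℝ :=
  sSup {x : ℝ | ∃ M₀ M₁ M₂, IsPOVM M₀ M₁ M₂ ∧ PbarCor q q₁ q₂ ρ₁ ρ₂ M₀ M₁ M₂ = x}

/-- `P_cor^opt(Q)`: the maximal value of `P_cor` over POVMs with `P_I = Q`. -/
def PcorOpt (Q q₁ q₂ : ℝ) (ρ₁ ρ₂ : Matrix (Fin 2) (Fin 2) ℂ) : ℝ :=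
  sSup {x : ℝ | ∃ M₀ M₁ M₂, IsPOVM M₀ M₁ M₂ ∧
    PIof q₁ q₂ ρ₁ ρ₂ M₀ = Q ∧ Pcor q₁ q₂ ρ₁ ρ₂ M₁ M₂ = x}

/-- `P_I(q) = { tr(ρ₀M₀) : POVMs attaining P̄_cor^opt(q) }`. -/
def PIset (q q₁ q₂ : ℝ) (ρ₁ ρ₂ : Matrix (Fin 2) (Fin 2) ℂ) : Set ℝ :=
  {Q : ℝ | ∃ M₀ M₁ M₂, IsPOVM M₀ M₁ M₂ ∧
    PbarCor q q₁ q₂ ρ₁ ρ₂ M₀ M₁ M₂ = PbarOpt q q₁ q₂ ρ₁ ρ₂ ∧ PIof q₁ q₂ ρ₁ ρ₂ M₀ = Q}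

/-- `q₀⁽⁰⁾ = sup{q > 0 : 0 ∈ P_I(q)}`. -/
def q0low (q₁ q₂ : ℝ) (ρ₁ ρ₂ : Matrix (Fin 2) (Fin 2) ℂ) : ℝ :=
  sSup {q : ℝ | 0 < q ∧ (0 : ℝ) ∈ PIset q q₁ q₂ ρ₁ ρ₂}

/-- `q₀⁽¹⁾ = inf{q > 0 : 1 ∈ P_I(q)}`. -/
def q0high (q₁ q₂ : ℝ) (ρ₁ ρ₂ : Matrix (Fin 2) (Fin 2) ℂ) : ℝ :=
  sInf {q : ℝ | 0 < q ∧ (1 : ℝ) ∈ PIset q q₁ q₂ ρ₁ ρ₂}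



lemma vmv_mul_vmv (a b c d : Fin 2 → ℂ) :
    vecMulVec a b * vecMulVec c d = (b ⬝ᵥ c) • vecMulVec a d := by
  ext i j
  simp [Matrix.mul_apply, vecMulVec_apply, dotProduct, Fin.sum_univ_two]
  ring

lemma trace_vmv (a b : Fin 2 → ℂ) : Matrix.trace (vecMulVec a b) = a ⬝ᵥ b := by
  simp [Matrix.trace, vecMulVec_apply, dotProduct, Fin.sum_univ_two, Matrix.diag]

lemma vmv_mul (a b : Fin 2 → ℂ) (A : Matrix (Fin 2) (Fin 2) ℂ) :
    vecMulVec a b * A = vecMulVec a (b ᵥ* A) := by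
  ext i j
  simp [Matrix.mul_apply, vecMulVec_apply, vecMul, dotProduct, Fin.sum_univ_two]
  ring

lemma mul_vmv (A : Matrix (Fin 2) (Fin 2) ℂ) (a b : Fin 2 → ℂ) :
    A * vecMulVec a b = vecMulVec (A *ᵥ a) b := by
  ext i j
  simp [Matrix.mul_apply, vecMulVec_apply, mulVec, dotProduct, Fin.sum_univ_two]
  fin_cases i <;> simp <;> ring

lemma vmv_psd (v : Fin 2 → ℂ) : (vecMulVec v (star v)).PosSemidef := by
  have h : vecMulVec v (star v) = (replicateRow Unit (star v))ᴴ * replicateRow Unit (star v) := by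
    rw [conjTranspose_replicateRow, star_star, ← vecMulVec_eq Unit]
  rw [h]
  exact posSemidef_conjTranspose_mul_self _

lemma smul_vmv_psd {r : ℝ} (hr : 0 ≤ r) (v : Fin 2 → ℂ) :
    ((r : ℂ) • vecMulVec v (star v)).PosSemidef := by
  have hs : ((Real.sqrt r : ℝ) : ℂ) * ((Real.sqrt r : ℝ) : ℂ) = (r : ℂ) := by
    rw [← Complex.ofReal_mul, Real.mul_self_sqrt hr]
  have h : (r : ℂ) • vecMulVec v (star v)
      = vecMulVec (((Real.sqrt r : ℝ) : ℂ) • v) (star (((Real.sqrt r : ℝ) : ℂ) • v)) := by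
    ext i j
    simp only [vecMulVec_apply, Matrix.smul_apply, Pi.smul_apply, star_apply, smul_eq_mul,
      Pi.star_apply, star_mul', Complex.star_def, Complex.conj_ofReal]
    linear_combination (-(v i * (starRingEnd ℂ) (v j))) * hs
  rw [h]; exact vmv_psd _

lemma herm_swap {A : Matrix (Fin 2) (Fin 2) ℂ} (hA : A.IsHermitian) (v w : Fin 2 → ℂ) :
    star w ⬝ᵥ (A *ᵥ v) = star (star v ⬝ᵥ (A *ᵥ w)) := by
  rw [star_dotProduct, star_mulVec, hA.eq, ← dotProduct_mulVec]

lemma resolution {ν₁ ν₂ : Fin 2 → ℂ}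
    (h1 : star ν₁ ⬝ᵥ ν₁ = 1) (h2 : star ν₂ ⬝ᵥ ν₂ = 1) (h12 : star ν₁ ⬝ᵥ ν₂ = 0) :
    vecMulVec ν₁ (star ν₁) + vecMulVec ν₂ (star ν₂) = 1 := by
  have h21 : star ν₂ ⬝ᵥ ν₁ = 0 := by
    rw [star_dotProduct, h12, star_zero]
  simp only [dotProduct, Fin.sum_univ_two, Pi.star_apply, Complex.star_def] at h1 h2 h12 h21
  have hUU : (!![ν₁ 0, ν₂ 0; ν₁ 1, ν₂ 1] : Matrix (Fin 2) (Fin 2) ℂ)ᴴ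
      * !![ν₁ 0, ν₂ 0; ν₁ 1, ν₂ 1] = 1 := by
    ext i j
    fin_cases i <;> fin_cases j <;>
      simp [Matrix.mul_apply, Matrix.conjTranspose_apply, Fin.sum_univ_two, Matrix.one_apply] <;>
      first
        | linear_combination h1
        | linear_combination h2
        | linear_combination h12
        | linear_combination h21
  have hUU' : (!![ν₁ 0, ν₂ 0; ν₁ 1, ν₂ 1] : Matrix (Fin 2) (Fin 2) ℂ)
      * !![ν₁ 0, ν₂ 0; ν₁ 1, ν₂ 1]ᴴ = 1 := mul_eq_one_comm.mp hUU
  rw [← hUU']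
  ext i j
  fin_cases i <;> fin_cases j <;>
    simp [Matrix.mul_apply, Fin.sum_univ_two, vecMulVec_apply, Matrix.conjTranspose_apply,
      Pi.star_apply, Complex.star_def]

lemma psd_trace_re_nonneg {A B : Matrix (Fin 2) (Fin 2) ℂ}
    (hA : A.PosSemidef) (hB : B.PosSemidef) : 0 ≤ (Matrix.trace (A * B)).re := by
  obtain ⟨C, hC⟩ : ∃ C : Matrix (Fin 2) (Fin 2) ℂ, A = Cᴴ * C := by
    classical
    open scoped MatrixOrder in
    obtain ⟨C, hC⟩ := CStarAlgebra.nonneg_iff_eq_star_mul_self.mp hA.nonneg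
    exact ⟨C, hC⟩
  subst hC
  rw [Matrix.mul_assoc, Matrix.trace_mul_comm]
  have h := hB.mul_mul_conjTranspose_same C
  have hd : ∀ i : Fin 2, 0 ≤ ((C * B * Cᴴ) i i).re := by
    intro i
    have h2 := h.dotProduct_mulVec_nonneg (Pi.single i 1)
    have he : star (Pi.single i 1) ⬝ᵥ ((C * B * Cᴴ) *ᵥ Pi.single i 1) = (C * B * Cᴴ) i i := by
      simp [dotProduct, mulVec, Pi.single_apply, Fin.sum_univ_two]
    rw [he] at h2
    exact (Complex.le_def.mp h2).1
  have ht : (Matrix.trace (C * B * Cᴴ)).re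
      = ((C * B * Cᴴ) 0 0).re + ((C * B * Cᴴ) 1 1).re := by
    simp [Matrix.trace, Fin.sum_univ_two, Matrix.diag]
  rw [ht]
  exact add_nonneg (hd 0) (hd 1)

lemma re_smul_trace (r : ℝ) (A B : Matrix (Fin 2) (Fin 2) ℂ) :
    (Matrix.trace ((r : ℂ) • A * B)).re = r * (Matrix.trace (A * B)).re := by
  rw [Matrix.smul_mul, Matrix.trace_smul, smul_eq_mul, Complex.re_ofReal_mul]


/-- If `C₁ = C₂` and `ρ₁₂ = 0`, then for every `Q ∈ [0,1)`,
`P_cor^opt(Q) = C₂(1−Q)`, i.e. `R_cor^opt(Q) = C₂`. -/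
theorem stmt14
    (q₁ q₂ : ℝ) (ρ₁ ρ₂ : Matrix (Fin 2) (Fin 2) ℂ)
    (hq₁ : 0 < q₁) (hq₂ : 0 < q₂) (hq : q₁ + q₂ = 1)
    (hρ₁ : ρ₁.PosSemidef) (htr₁ : ρ₁.trace = 1)
    (hρ₂ : ρ₂.PosSemidef) (htr₂ : ρ₂.trace = 1)
    (hρ0 : (rho0 q₁ q₂ ρ₁ ρ₂).PosDef)
    (S : Matrix (Fin 2) (Fin 2) ℂ) (hS : S.PosSemidef) (hSS : S * S = rho0 q₁ q₂ ρ₁ ρ₂)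
    (ν₁ ν₂ : Fin 2 → ℂ)
    (hν₁ : star ν₁ ⬝ᵥ ν₁ = 1) (hν₂ : star ν₂ ⬝ᵥ ν₂ = 1) (hν₁₂ : star ν₁ ⬝ᵥ ν₂ = 0)
    (C₁ C₂ : ℝ) (hC12 : C₁ ≤ C₂) (hCsum : 1 < C₁ + C₂)
    (hbar₁ : S * ((C₁ : ℂ) • vecMulVec ν₁ (star ν₁)
        + ((1 - C₂ : ℝ) : ℂ) • vecMulVec ν₂ (star ν₂)) * S = (q₁ : ℂ) • ρ₁)
    (hbar₂ : S * (((1 - C₁ : ℝ) : ℂ) • vecMulVec ν₁ (star ν₁)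
        + (C₂ : ℂ) • vecMulVec ν₂ (star ν₂)) * S = (q₂ : ℂ) • ρ₂)
    (ρ11 ρ22 : ℝ) (ρ12 : ℂ)
    (h11 : (ρ11 : ℂ) = star ν₁ ⬝ᵥ (rho0 q₁ q₂ ρ₁ ρ₂ *ᵥ ν₁))
    (h22 : (ρ22 : ℂ) = star ν₂ ⬝ᵥ (rho0 q₁ q₂ ρ₁ ρ₂ *ᵥ ν₂))
    (h12 : ρ12 = star ν₁ ⬝ᵥ (rho0 q₁ q₂ ρ₁ ρ₂ *ᵥ ν₂))
    (hCeq : C₁ = C₂) (h12z : ρ12 = 0) :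
    ∀ Q ∈ Set.Ico (0 : ℝ) 1, PcorOpt Q q₁ q₂ ρ₁ ρ₂ = C₂ * (1 - Q) := by
  subst hCeq
  intro Q hQ
  obtain ⟨hQ0, hQ1⟩ := hQ
  set R := rho0 q₁ q₂ ρ₁ ρ₂ with hR
  set P₁ := vecMulVec ν₁ (star ν₁) with hP₁
  set P₂ := vecMulVec ν₂ (star ν₂) with hP₂
  have hP : P₁ + P₂ = 1 := resolution hν₁ hν₂ hν₁₂
  have h21ν : star ν₂ ⬝ᵥ ν₁ = 0 := by rw [star_dotProduct, hν₁₂, star_zero]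
  have hν₁' : ν₁ ⬝ᵥ star ν₁ = 1 := by rw [dotProduct_comm]; exact hν₁
  have hν₂' : ν₂ ⬝ᵥ star ν₂ = 1 := by rw [dotProduct_comm]; exact hν₂
  have htrρ₀ : Matrix.trace R = 1 := by
    rw [hR]
    unfold rho0
    rw [Matrix.trace_add, Matrix.trace_smul, Matrix.trace_smul, htr₁, htr₂]
    push_cast
    simp only [smul_eq_mul, mul_one]
    exact_mod_cast hq
  have hC : (1:ℝ)/2 < C₁ := by linarith
  have hSherm : Sᴴ = S := hS.1
  have hdetS : IsUnit S.det := by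
    have h1 : IsUnit (S.det * S.det) := by
      rw [← Matrix.det_mul, hSS]
      exact ((Matrix.isUnit_iff_isUnit_det R).mp hρ0.isUnit)
    exact isUnit_of_mul_isUnit_left h1
  have hSinv : S * S⁻¹ = 1 := Matrix.mul_nonsing_inv S hdetS
  have hSinv' : S⁻¹ * S = 1 := Matrix.nonsing_inv_mul S hdetS
  have hSinvherm : S⁻¹ᴴ = S⁻¹ := by rw [Matrix.conjTranspose_nonsing_inv, hSherm]
  -- decomposition of R
  have h21ρ : star ν₂ ⬝ᵥ (R *ᵥ ν₁) = 0 := by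
    rw [herm_swap hρ0.1, ← h12, h12z, star_zero]
  have sandwich : ∀ (A : Matrix (Fin 2) (Fin 2) ℂ) (a b : Fin 2 → ℂ),
      vecMulVec a (star a) * A * vecMulVec b (star b)
        = (star a ⬝ᵥ (A *ᵥ b)) • vecMulVec a (star b) := by
    intro A a b
    rw [vmv_mul, vmv_mul_vmv, dotProduct_mulVec]
  have hdec : R = (ρ11 : ℂ) • P₁ + (ρ22 : ℂ) • P₂ := by
    have e : R = (P₁ + P₂) * R * (P₁ + P₂) := by rw [hP, Matrix.one_mul, Matrix.mul_one]
    calc R = (P₁ + P₂) * R * (P₁ + P₂) := e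
      _ = P₁ * R * P₁ + P₁ * R * P₂ + (P₂ * R * P₁ + P₂ * R * P₂) := by
          noncomm_ring
      _ = (ρ11 : ℂ) • P₁ + (ρ22 : ℂ) • P₂ := by
          rw [hP₁, hP₂, sandwich, sandwich, sandwich, sandwich, ← h11, ← h22, ← h12, h12z,
            h21ρ]
          simp
  have hρ11 : 0 ≤ ρ11 := by
    have h := hρ0.posSemidef.dotProduct_mulVec_nonneg ν₁
    rw [← h11] at h
    exact_mod_cast h
  have hρ22 : 0 ≤ ρ22 := by
    have h := hρ0.posSemidef.dotProduct_mulVec_nonneg ν₂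
    rw [← h22] at h
    exact_mod_cast h
  have hsum1 : ρ11 + ρ22 = 1 := by
    have h := congrArg Matrix.trace hdec
    rw [htrρ₀, Matrix.trace_add, Matrix.trace_smul, Matrix.trace_smul, hP₁, hP₂, trace_vmv,
      trace_vmv, hν₁', hν₂', smul_eq_mul, smul_eq_mul, mul_one, mul_one] at h
    exact_mod_cast h.symm
  -- upper bound
  have hstep : ∀ (q : ℝ) (ρ M : Matrix (Fin 2) (Fin 2) ℂ) (u w : Fin 2 → ℂ),
      vecMulVec u (star u) + vecMulVec w (star w) = 1 →
      (q : ℂ) • ρ = S * ((C₁ : ℂ) • vecMulVec u (star u)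
        + ((1 - C₁ : ℝ) : ℂ) • vecMulVec w (star w)) * S →
      M.PosSemidef →
      q * (Matrix.trace (ρ * M)).re ≤ C₁ * (Matrix.trace (R * M)).re := by
    intro q ρ M u w hPuw hbar hM
    have hc₀ : (C₁ : ℂ) • R = S * ((C₁ : ℂ) • (vecMulVec u (star u) + vecMulVec w (star w))) * S := by
      rw [hPuw, ← hSS]
      simp [Matrix.mul_smul, Matrix.smul_mul, Matrix.mul_one]
    have hX : (C₁ : ℂ) • (vecMulVec u (star u) + vecMulVec w (star w))
        - ((C₁ : ℂ) • vecMulVec u (star u) + ((1 - C₁ : ℝ) : ℂ) • vecMulVec w (star w))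
        = ((2 * C₁ - 1 : ℝ) : ℂ) • vecMulVec w (star w) := by
      push_cast
      module
    have hD : (C₁ : ℂ) • R - (q : ℂ) • ρ
        = ((2 * C₁ - 1 : ℝ) : ℂ) • (S * vecMulVec w (star w) * S) := by
      rw [hc₀, hbar, ← Matrix.sub_mul, ← Matrix.mul_sub, hX]
      simp [Matrix.mul_smul, Matrix.smul_mul]
    have hpsd : (S * vecMulVec w (star w) * S).PosSemidef := by
      have h := (vmv_psd w).mul_mul_conjTranspose_same S
      rwa [hSherm] at h
    have hge : 0 ≤ (Matrix.trace ((S * vecMulVec w (star w) * S) * M)).re :=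
      psd_trace_re_nonneg hpsd hM
    have e : C₁ * (Matrix.trace (R * M)).re - q * (Matrix.trace (ρ * M)).re
        = (2 * C₁ - 1) * (Matrix.trace ((S * vecMulVec w (star w) * S) * M)).re := by
      rw [← re_smul_trace C₁ R M, ← re_smul_trace q ρ M, ← Complex.sub_re, ← Matrix.trace_sub,
        ← Matrix.sub_mul, hD, re_smul_trace]
    nlinarith [mul_nonneg (by linarith : (0:ℝ) ≤ 2 * C₁ - 1) hge]
  have hbar₂' : (q₂ : ℂ) • ρ₂ = S * ((C₁ : ℂ) • vecMulVec ν₂ (star ν₂)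
      + ((1 - C₁ : ℝ) : ℂ) • vecMulVec ν₁ (star ν₁)) * S := by
    rw [add_comm ((C₁ : ℂ) • vecMulVec ν₂ (star ν₂))]
    exact hbar₂.symm
  have hub : ∀ M₀ M₁ M₂, IsPOVM M₀ M₁ M₂ → PIof q₁ q₂ ρ₁ ρ₂ M₀ = Q →
      Pcor q₁ q₂ ρ₁ ρ₂ M₁ M₂ ≤ C₁ * (1 - Q) := by
    rintro M₀ M₁ M₂ ⟨h0, h1, h2, hsumM⟩ hPI
    have htot : Matrix.trace (R * M₀) + Matrix.trace (R * M₁) + Matrix.trace (R * M₂) = 1 := by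
      rw [← Matrix.trace_add, ← Matrix.trace_add, ← Matrix.mul_add, ← Matrix.mul_add, hsumM,
        Matrix.mul_one, htrρ₀]
    have hPI' : (Matrix.trace (R * M₀)).re = Q := by
      rw [hR]; exact hPI
    have hre := congrArg Complex.re htot
    simp only [Complex.add_re, Complex.one_re] at hre
    have hsplit : (Matrix.trace (R * M₁)).re + (Matrix.trace (R * M₂)).re = 1 - Q := by
      linarith
    have hb1 := hstep q₁ ρ₁ M₁ ν₁ ν₂ hP hbar₁.symm h1
    have hb2 := hstep q₂ ρ₂ M₂ ν₂ ν₁ (by rw [add_comm]; exact hP) hbar₂' h2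
    unfold Pcor
    calc q₁ * (Matrix.trace (ρ₁ * M₁)).re + q₂ * (Matrix.trace (ρ₂ * M₂)).re
        ≤ C₁ * (Matrix.trace (R * M₁)).re + C₁ * (Matrix.trace (R * M₂)).re := add_le_add hb1 hb2
      _ = C₁ * (1 - Q) := by rw [← mul_add, hsplit]
  -- witness POVM
  have hQ1' : 0 ≤ 1 - Q := by linarith
  have hr₁ : 0 ≤ (1 - Q) * ρ11 := mul_nonneg hQ1' hρ11
  have hr₂ : 0 ≤ (1 - Q) * ρ22 := mul_nonneg hQ1' hρ22
  set N₁ := S⁻¹ * P₁ * S⁻¹ with hN₁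
  set N₂ := S⁻¹ * P₂ * S⁻¹ with hN₂
  have hNform : ∀ u : Fin 2 → ℂ, S⁻¹ * vecMulVec u (star u) * S⁻¹
      = vecMulVec (S⁻¹ *ᵥ u) (star (S⁻¹ *ᵥ u)) := by
    intro u
    rw [mul_vmv, vmv_mul, star_mulVec, hSinvherm]
  have h0psd : ((Q : ℂ) • (1 : Matrix (Fin 2) (Fin 2) ℂ)).PosSemidef := by
    rw [show ((Q : ℂ) • (1 : Matrix (Fin 2) (Fin 2) ℂ)) = (Q : ℂ) • P₁ + (Q : ℂ) • P₂ by
      (rw [← smul_add, hP])]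
    exact (smul_vmv_psd hQ0 ν₁).add (smul_vmv_psd hQ0 ν₂)
  have h1psd : ((((1 - Q) * ρ11 : ℝ) : ℂ) • N₁).PosSemidef := by
    rw [hN₁, hP₁, hNform]
    exact smul_vmv_psd hr₁ _
  have h2psd : ((((1 - Q) * ρ22 : ℝ) : ℂ) • N₂).PosSemidef := by
    rw [hN₂, hP₂, hNform]
    exact smul_vmv_psd hr₂ _
  have hRinv : S⁻¹ * R * S⁻¹ = 1 := by
    rw [← hSS, ← Matrix.mul_assoc, hSinv', Matrix.one_mul, hSinv]
  have hexp : S⁻¹ * ((ρ11 : ℂ) • P₁ + (ρ22 : ℂ) • P₂) * S⁻¹ = (ρ11 : ℂ) • N₁ + (ρ22 : ℂ) • N₂ := by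
    rw [hN₁, hN₂]
    simp only [Matrix.mul_add, Matrix.add_mul, Matrix.mul_smul, Matrix.smul_mul]
  have hN1 : (ρ11 : ℂ) • N₁ + (ρ22 : ℂ) • N₂ = 1 := by
    rw [← hexp, ← hdec, hRinv]
  have hsumM' : (Q : ℂ) • (1 : Matrix (Fin 2) (Fin 2) ℂ) + (((1 - Q) * ρ11 : ℝ) : ℂ) • N₁
      + (((1 - Q) * ρ22 : ℝ) : ℂ) • N₂ = 1 := by
    have h12' : (((1 - Q) * ρ11 : ℝ) : ℂ) • N₁ + (((1 - Q) * ρ22 : ℝ) : ℂ) • N₂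
        = ((1 - Q : ℝ) : ℂ) • ((ρ11 : ℂ) • N₁ + (ρ22 : ℂ) • N₂) := by
      push_cast
      module
    rw [add_assoc, h12', hN1, ← add_smul]
    norm_num
  have hPIw : PIof q₁ q₂ ρ₁ ρ₂ ((Q : ℂ) • (1 : Matrix (Fin 2) (Fin 2) ℂ)) = Q := by
    unfold PIof
    rw [← hR, Matrix.mul_smul, Matrix.mul_one, Matrix.trace_smul, htrρ₀, smul_eq_mul, mul_one,
      Complex.ofReal_re]
  -- trace helper
  have htr : ∀ (B : Matrix (Fin 2) (Fin 2) ℂ) (u : Fin 2 → ℂ),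
      Matrix.trace ((S * B * S) * (S⁻¹ * vecMulVec u (star u) * S⁻¹))
        = Matrix.trace (B * vecMulVec u (star u)) := by
    intro B u
    have hc1 : ∀ X : Matrix (Fin 2) (Fin 2) ℂ, S * (S⁻¹ * X) = X := fun X => by
      rw [← Matrix.mul_assoc, hSinv, Matrix.one_mul]
    have h' : (S * B * S) * (S⁻¹ * vecMulVec u (star u) * S⁻¹)
        = S * (B * vecMulVec u (star u)) * S⁻¹ := by
      simp only [Matrix.mul_assoc]
      rw [hc1]
    rw [h', Matrix.trace_mul_cycle, ← Matrix.mul_assoc, hSinv', Matrix.one_mul]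
  have htrB₁ : Matrix.trace (((C₁ : ℂ) • P₁ + ((1 - C₁ : ℝ) : ℂ) • P₂) * P₁) = (C₁ : ℂ) := by
    rw [hP₁, hP₂, Matrix.add_mul, Matrix.smul_mul, Matrix.smul_mul, vmv_mul_vmv, vmv_mul_vmv,
      hν₁, h21ν]
    simp [trace_vmv, hν₁']
  have htrB₂ : Matrix.trace ((((1 - C₁ : ℝ) : ℂ) • P₁ + (C₁ : ℂ) • P₂) * P₂) = (C₁ : ℂ) := by
    rw [hP₁, hP₂, Matrix.add_mul, Matrix.smul_mul, Matrix.smul_mul, vmv_mul_vmv, vmv_mul_vmv,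
      hν₂, hν₁₂]
    simp [trace_vmv, hν₂']
  have ht₁ : Matrix.trace ((q₁ : ℂ) • ρ₁ * N₁) = (C₁ : ℂ) := by
    rw [← hbar₁, hN₁, hP₁, hP₂, htr, ← hP₁, ← hP₂]
    exact htrB₁
  have ht₂ : Matrix.trace ((q₂ : ℂ) • ρ₂ * N₂) = (C₁ : ℂ) := by
    rw [← hbar₂, hN₂, hP₁, hP₂, htr, ← hP₁, ← hP₂]
    exact htrB₂
  have hq1t : q₁ * (Matrix.trace (ρ₁ * N₁)).re = C₁ := by
    rw [← re_smul_trace, ht₁, Complex.ofReal_re]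
  have hq2t : q₂ * (Matrix.trace (ρ₂ * N₂)).re = C₁ := by
    rw [← re_smul_trace, ht₂, Complex.ofReal_re]
  have hPcorw : Pcor q₁ q₂ ρ₁ ρ₂ ((((1 - Q) * ρ11 : ℝ) : ℂ) • N₁)
      ((((1 - Q) * ρ22 : ℝ) : ℂ) • N₂) = C₁ * (1 - Q) := by
    unfold Pcor
    rw [Matrix.mul_smul, Matrix.mul_smul, Matrix.trace_smul, Matrix.trace_smul, smul_eq_mul,
      smul_eq_mul, Complex.re_ofReal_mul, Complex.re_ofReal_mul]
    linear_combination ((1 - Q) * ρ11) * hq1t + ((1 - Q) * ρ22) * hq2t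
      + (C₁ * (1 - Q)) * hsum1
  have hmem : C₁ * (1 - Q) ∈ {x : ℝ | ∃ M₀ M₁ M₂, IsPOVM M₀ M₁ M₂ ∧
      PIof q₁ q₂ ρ₁ ρ₂ M₀ = Q ∧ Pcor q₁ q₂ ρ₁ ρ₂ M₁ M₂ = x} :=
    ⟨(Q : ℂ) • 1, (((1 - Q) * ρ11 : ℝ) : ℂ) • N₁, (((1 - Q) * ρ22 : ℝ) : ℂ) • N₂,
      ⟨h0psd, h1psd, h2psd, hsumM'⟩, hPIw, hPcorw⟩
  have hbdd : ∀ x ∈ {x : ℝ | ∃ M₀ M₁ M₂, IsPOVM M₀ M₁ M₂ ∧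
      PIof q₁ q₂ ρ₁ ρ₂ M₀ = Q ∧ Pcor q₁ q₂ ρ₁ ρ₂ M₁ M₂ = x}, x ≤ C₁ * (1 - Q) := by
    rintro x ⟨M₀, M₁, M₂, hp, hpi, rfl⟩
    exact hub M₀ M₁ M₂ hp hpi
  unfold PcorOpt
  exact le_antisymm (csSup_le ⟨_, hmem⟩ hbdd) (le_csSup ⟨_, hbdd⟩ hmem)


end FRIR
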